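/- Let a, b ∈ [0,1] with a + b = 1, and let x ∈ [0,1]. Then (max(a,b))^x + (min(a,b))^x · 2^{x−1} ≥ 1. -/
import Mathlib


/-- **Lemma 13.** For `a, b ∈ [0,1]` with `a + b = 1` and `x ∈ [0,1]`,
`(max(a,b))^x + (min(a,b))^x · 2^{x−1} ≥ 1`. -/
theorem stmt5 (a b x : ℝ) (ha : a ∈ Set.Icc (0:ℝ) 1) (hb : b ∈ Set.Icc (0:ℝ) 1)
    (hab : a + b = 1) (hx : x ∈ Set.Icc (0:ℝ) 1) :
    1 ≤ (max a b) ^ x + (min a b) ^ x * (2:ℝ) ^ (x - 1) := by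
  obtain ⟨ha0, ha1⟩ := ha
  obtain ⟨hb0, hb1⟩ := hb
  obtain ⟨hx0, hx1⟩ := hx
  set M := max a b with hM
  set m := min a b with hm
  have hmM : m + M = 1 := by
    rw [hM, hm]; rcases le_total a b with h | h <;>
      simp [max_eq_right, max_eq_left, min_eq_left, min_eq_right, h] <;> linarith
  have hm0 : 0 ≤ m := le_min ha0 hb0
  have hmle : m ≤ M := min_le_max
  have hM0 : (0:ℝ) < M := by linarith
  have hM1 : M ≤ 1 := max_le ha1 hb1
  have h1 : M ≤ M ^ x := by
    calc M = M ^ (1:ℝ) := (Real.rpow_one M).symm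
    _ ≤ M ^ x := Real.rpow_le_rpow_of_exponent_ge hM0 hM1 hx1
  have h2 : m ≤ m ^ x * (2:ℝ) ^ (x - 1) := by
    have key : 2 * m ≤ (2 * m) ^ x := by
      rcases eq_or_lt_of_le hm0 with h | h
      · simp [← h]
        positivity
      · calc 2 * m = (2 * m) ^ (1:ℝ) := (Real.rpow_one _).symm
        _ ≤ (2 * m) ^ x := Real.rpow_le_rpow_of_exponent_ge (by linarith) (by linarith) hx1
    have hmul : (2 * m) ^ x = (2:ℝ) ^ x * m ^ x := Real.mul_rpow (by norm_num) hm0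
    have h2x : (2:ℝ) ^ (x - 1) = (2:ℝ) ^ x / 2 := by
      rw [Real.rpow_sub (by norm_num), Real.rpow_one]
    rw [h2x]
    nlinarith [key, hmul]
  linarith
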